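/- Let τ₁, τ₂ ∈ ℍ, set Z = Z(τ₁,τ₂) = [[τ₁τ₂, τ₁],[τ₂, 1]], X = Re Z, Y = Im Z, and let l = [[a,b],[c,d]] be any real 2×2 matrix. Define the orthogonal projection of l onto the plane v⁺ = ℝX + ℝY by l_{v⁺} := ((l,X)/(X,X))·X + ((l,Y)/(Y,Y))·Y. Then (l_{v⁺}, l_{v⁺})/2 = (l, Z)·(l, Z̄) / (Z, Z̄) = |d·τ₁τ₂ − c·τ₁ − b·τ₂ + a|² / (4·Im(τ₁)·Im(τ₂)), where Z̄ is the entrywise complex conjugate of Z. -/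

import Mathlib

noncomputable section

open Complex Matrix

/-- The bilinear form on 2×2 complex matrices obtained by polarizing the quadratic
form `x ↦ −2 det x`: `(x,y) = b₁c₂ + c₁b₂ − a₁d₂ − d₁a₂`. -/
def bform (x y : Matrix (Fin 2) (Fin 2) ℂ) : ℂ :=
  x 0 1 * y 1 0 + x 1 0 * y 0 1 - x 0 0 * y 1 1 - x 1 1 * y 0 0

/-- `Z(τ₁,τ₂) = [[τ₁τ₂, τ₁],[τ₂, 1]]`. -/
def Zmat (τ₁ τ₂ : ℂ) : Matrix (Fin 2) (Fin 2) ℂ := !![τ₁ * τ₂, τ₁; τ₂, 1]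

lemma bform_comb (r s : ℂ) (x y : Matrix (Fin 2) (Fin 2) ℂ) :
    bform (r • x + s • y) (r • x + s • y) =
      r*r*bform x x + r*s*bform x y + s*r*bform y x + s*s*bform y y := by
  simp only [bform, Matrix.add_apply, Matrix.smul_apply, smul_eq_mul]
  ring

set_option maxHeartbeats 1000000 in
/-- for `τ₁, τ₂ ∈ ℍ`, `Z = Z(τ₁,τ₂)`, `X = Re Z`, `Y = Im Z`, and any
real matrix `l = [[a,b],[c,d]]`, the projection
`l_{v⁺} = ((l,X)/(X,X))X + ((l,Y)/(Y,Y))Y` onto `v⁺ = ℝX + ℝY` satisfies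
`(l_{v⁺},l_{v⁺})/2 = (l,Z)(l,Z̄)/(Z,Z̄) = |dτ₁τ₂ − cτ₁ − bτ₂ + a|²/(4 Im τ₁ Im τ₂)`. -/
theorem stmt19 (τ₁ τ₂ : ℂ) (h₁ : 0 < τ₁.im) (h₂ : 0 < τ₂.im)
    (l : Matrix (Fin 2) (Fin 2) ℝ) :
    ∀ Z X Y lC lproj : Matrix (Fin 2) (Fin 2) ℂ,
      Z = Zmat τ₁ τ₂ →
      X = Z.map (fun z => (z.re : ℂ)) →
      Y = Z.map (fun z => (z.im : ℂ)) →
      lC = l.map (fun x : ℝ => (x : ℂ)) →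
      lproj = (bform lC X / bform X X) • X + (bform lC Y / bform Y Y) • Y →
      bform lproj lproj / 2
          = bform lC Z * bform lC (Z.map (starRingEnd ℂ)) / bform Z (Z.map (starRingEnd ℂ))
        ∧ bform lproj lproj / 2
          = ((‖(l 1 1 : ℂ) * τ₁ * τ₂ - (l 1 0 : ℂ) * τ₁ - (l 0 1 : ℂ) * τ₂
                + (l 0 0 : ℂ)‖ ^ 2 : ℝ) : ℂ) / ((4 * τ₁.im * τ₂.im : ℝ) : ℂ) := by
  intro Z X Y lC lproj hZ hX hY hlC hlp
  subst hZ hX hY hlC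
  have hy₁0 : τ₁.im ≠ 0 := ne_of_gt h₁
  have hy₂0 : τ₂.im ≠ 0 := ne_of_gt h₂
  have hy₁0' : ((τ₁.im : ℝ) : ℂ) ≠ 0 := Complex.ofReal_ne_zero.mpr hy₁0
  have hy₂0' : ((τ₂.im : ℝ) : ℂ) ≠ 0 := Complex.ofReal_ne_zero.mpr hy₂0
  set P : ℝ := l 0 1 * τ₂.re + l 1 0 * τ₁.re - l 0 0 - l 1 1 * (τ₁.re*τ₂.re - τ₁.im*τ₂.im)
    with hP
  set Q : ℝ := l 0 1 * τ₂.im + l 1 0 * τ₁.im - l 1 1 * (τ₁.re*τ₂.im + τ₂.re*τ₁.im) with hQ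
  set X := (Zmat τ₁ τ₂).map (fun z => (z.re : ℂ)) with hX
  set Y := (Zmat τ₁ τ₂).map (fun z => (z.im : ℂ)) with hY
  set lC := l.map (fun x : ℝ => (x : ℂ)) with hlC
  have eCX : bform lC X = ((P : ℝ) : ℂ) := by
    apply Complex.ext <;>
      simp only [bform, Zmat, hX, hlC, hP, Matrix.map_apply, Matrix.cons_val',
        Matrix.cons_val_zero, Matrix.cons_val_one, Matrix.head_cons, Matrix.empty_val',
        Matrix.cons_val_fin_one, Matrix.head_fin_const, Matrix.of_apply,
        Complex.add_re, Complex.add_im, Complex.sub_re, Complex.sub_im,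
        Complex.mul_re, Complex.mul_im, Complex.ofReal_re, Complex.ofReal_im,
        Complex.one_re, Complex.one_im] <;> ring1
  have eCY : bform lC Y = ((Q : ℝ) : ℂ) := by
    apply Complex.ext <;>
      simp only [bform, Zmat, hY, hlC, hQ, Matrix.map_apply, Matrix.cons_val',
        Matrix.cons_val_zero, Matrix.cons_val_one, Matrix.head_cons, Matrix.empty_val',
        Matrix.cons_val_fin_one, Matrix.head_fin_const, Matrix.of_apply,
        Complex.add_re, Complex.add_im, Complex.sub_re, Complex.sub_im,
        Complex.mul_re, Complex.mul_im, Complex.ofReal_re, Complex.ofReal_im,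
        Complex.one_re, Complex.one_im] <;> ring1
  have eXX : bform X X = ((2*τ₁.im*τ₂.im : ℝ) : ℂ) := by
    apply Complex.ext <;>
      simp only [bform, Zmat, hX, Matrix.map_apply, Matrix.cons_val',
        Matrix.cons_val_zero, Matrix.cons_val_one, Matrix.head_cons, Matrix.empty_val',
        Matrix.cons_val_fin_one, Matrix.head_fin_const, Matrix.of_apply,
        Complex.add_re, Complex.add_im, Complex.sub_re, Complex.sub_im,
        Complex.mul_re, Complex.mul_im, Complex.ofReal_re, Complex.ofReal_im,
        Complex.one_re, Complex.one_im] <;> ring1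
  have eYY : bform Y Y = ((2*τ₁.im*τ₂.im : ℝ) : ℂ) := by
    apply Complex.ext <;>
      simp only [bform, Zmat, hY, Matrix.map_apply, Matrix.cons_val',
        Matrix.cons_val_zero, Matrix.cons_val_one, Matrix.head_cons, Matrix.empty_val',
        Matrix.cons_val_fin_one, Matrix.head_fin_const, Matrix.of_apply,
        Complex.add_re, Complex.add_im, Complex.sub_re, Complex.sub_im,
        Complex.mul_re, Complex.mul_im, Complex.ofReal_re, Complex.ofReal_im,
        Complex.one_re, Complex.one_im] <;> ring1
  have eXY : bform X Y = 0 := by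
    apply Complex.ext <;>
      simp only [bform, Zmat, hX, hY, Matrix.map_apply, Matrix.cons_val',
        Matrix.cons_val_zero, Matrix.cons_val_one, Matrix.head_cons, Matrix.empty_val',
        Matrix.cons_val_fin_one, Matrix.head_fin_const, Matrix.of_apply,
        Complex.add_re, Complex.add_im, Complex.sub_re, Complex.sub_im,
        Complex.mul_re, Complex.mul_im, Complex.ofReal_re, Complex.ofReal_im,
        Complex.one_re, Complex.one_im, Complex.zero_re, Complex.zero_im] <;> ring1
  have eYX : bform Y X = 0 := by
    apply Complex.ext <;>
      simp only [bform, Zmat, hX, hY, Matrix.map_apply, Matrix.cons_val',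
        Matrix.cons_val_zero, Matrix.cons_val_one, Matrix.head_cons, Matrix.empty_val',
        Matrix.cons_val_fin_one, Matrix.head_fin_const, Matrix.of_apply,
        Complex.add_re, Complex.add_im, Complex.sub_re, Complex.sub_im,
        Complex.mul_re, Complex.mul_im, Complex.ofReal_re, Complex.ofReal_im,
        Complex.one_re, Complex.one_im, Complex.zero_re, Complex.zero_im] <;> ring1
  have hD : ((2*τ₁.im*τ₂.im : ℝ) : ℂ) ≠ 0 := by
    exact_mod_cast mul_ne_zero (mul_ne_zero two_ne_zero hy₁0) hy₂0
  have key : bform lproj lproj = (((P^2+Q^2)/(2*τ₁.im*τ₂.im) : ℝ) : ℂ) := by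
    rw [hlp, bform_comb, eCX, eCY, eXX, eYY, eXY, eYX, Complex.ofReal_div]
    field_simp
    push_cast
    ring
  have eZ : bform lC (Zmat τ₁ τ₂) = (P : ℂ) + (Q : ℂ) * Complex.I := by
    apply Complex.ext <;>
      simp only [bform, Zmat, hlC, hP, hQ, Matrix.map_apply, Matrix.cons_val',
        Matrix.cons_val_zero, Matrix.cons_val_one, Matrix.head_cons, Matrix.empty_val',
        Matrix.cons_val_fin_one, Matrix.head_fin_const, Matrix.of_apply,
        Complex.add_re, Complex.add_im, Complex.sub_re, Complex.sub_im,
        Complex.mul_re, Complex.mul_im, Complex.ofReal_re, Complex.ofReal_im,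
        Complex.one_re, Complex.one_im, Complex.I_re, Complex.I_im] <;> ring1
  have eZc : bform lC ((Zmat τ₁ τ₂).map (starRingEnd ℂ)) = (P : ℂ) - (Q : ℂ) * Complex.I := by
    apply Complex.ext <;>
      simp only [bform, Zmat, hlC, hP, hQ, Matrix.map_apply, Matrix.cons_val',
        Matrix.cons_val_zero, Matrix.cons_val_one, Matrix.head_cons, Matrix.empty_val',
        Matrix.cons_val_fin_one, Matrix.head_fin_const, Matrix.of_apply,
        Complex.add_re, Complex.add_im, Complex.sub_re, Complex.sub_im,
        Complex.mul_re, Complex.mul_im, Complex.ofReal_re, Complex.ofReal_im,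
        Complex.one_re, Complex.one_im, Complex.I_re, Complex.I_im,
        Complex.conj_re, Complex.conj_im, _root_.map_one] <;> ring1
  have eZZ : bform (Zmat τ₁ τ₂) ((Zmat τ₁ τ₂).map (starRingEnd ℂ))
      = ((4*τ₁.im*τ₂.im : ℝ) : ℂ) := by
    apply Complex.ext <;>
      simp only [bform, Zmat, Matrix.map_apply, Matrix.cons_val',
        Matrix.cons_val_zero, Matrix.cons_val_one, Matrix.head_cons, Matrix.empty_val',
        Matrix.cons_val_fin_one, Matrix.head_fin_const, Matrix.of_apply,
        Complex.add_re, Complex.add_im, Complex.sub_re, Complex.sub_im,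
        Complex.mul_re, Complex.mul_im, Complex.ofReal_re, Complex.ofReal_im,
        Complex.one_re, Complex.one_im, Complex.conj_re, Complex.conj_im, _root_.map_one] <;> ring1
  have hPQ : ((P:ℂ) + (Q:ℂ)*Complex.I) * ((P:ℂ) - (Q:ℂ)*Complex.I) = ((P^2+Q^2 : ℝ) : ℂ) := by
    rw [show ((P:ℂ) + (Q:ℂ)*Complex.I) * ((P:ℂ) - (Q:ℂ)*Complex.I)
        = (P:ℂ)^2 - ((Q:ℂ)^2)*(Complex.I^2) from by ring, Complex.I_sq]
    push_cast
    ring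
  have habs : (‖(l 1 1 : ℂ) * τ₁ * τ₂ - (l 1 0 : ℂ) * τ₁ - (l 0 1 : ℂ) * τ₂
      + (l 0 0 : ℂ)‖ ^ 2 : ℝ) = P^2 + Q^2 := by
    rw [Complex.sq_norm, Complex.normSq_apply]
    simp only [Complex.mul_re, Complex.mul_im, Complex.add_re, Complex.add_im,
      Complex.sub_re, Complex.sub_im, Complex.ofReal_re, Complex.ofReal_im, hP, hQ]
    ring1
  have h4 : ((4*τ₁.im*τ₂.im : ℝ) : ℂ) ≠ 0 := by
    exact_mod_cast mul_ne_zero (mul_ne_zero four_ne_zero hy₁0) hy₂0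
  have main : (((P^2+Q^2)/(2*τ₁.im*τ₂.im) : ℝ) : ℂ) / 2
      = ((P^2+Q^2 : ℝ) : ℂ) / ((4*τ₁.im*τ₂.im : ℝ) : ℂ) := by
    rw [Complex.ofReal_div, div_div, div_eq_div_iff (mul_ne_zero hD two_ne_zero) h4]
    push_cast
    ring
  refine ⟨?_, ?_⟩
  · rw [key, eZ, eZc, eZZ, hPQ, main]
  · rw [key, main, habs]
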